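/- Let n ≥ 2 and let λ and ν be permutations of {1,…,n}. There exists a multiset of n permutations of {1,…,n}, containing both λ and ν, whose permutation matrices sum to the all-ones matrix J, if and only if λ(i) ≠ ν(i) for every i ∈ {1,…,n}. In particular, if λ(i) ≠ ν(i) for all i, then there exist permutations π_1,…,π_{n−2} with P_λ + P_ν + Σ_{i=1}^{n−2} P_{π_i} = J. -/

import Mathlib

/-- The permutation matrix of `π`: entry `(i,j)` is `1` if `π i = j`, else `0`. -/
def permMat (n : ℕ) (π : Equiv.Perm (Fin n)) : Matrix (Fin n) (Fin n) ℕ :=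
  Matrix.of fun i j => if π i = j then 1 else 0

open Finset

/-- Entry of a multiset sum of matrices. -/
lemma multiset_sum_apply {n : ℕ} (s : Multiset (Matrix (Fin n) (Fin n) ℕ))
    (i j : Fin n) : s.sum i j = (s.map fun A => A i j).sum := by
  induction s using Multiset.induction with
  | empty => simp [Matrix.zero_apply]
  | cons a s ih => simp [Matrix.add_apply, ih]

/-- Hall-based extension step: a list of permutations which pairwise disagree
everywhere (columns have no duplicates), of length `< n`, can be extended by one
more permutation. -/
lemma extend_step {n : ℕ} (L : List (Equiv.Perm (Fin n))) (hlen : L.length < n)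
    (hcol : ∀ i, (L.map fun ρ => ρ i).Nodup) :
    ∃ ρ : Equiv.Perm (Fin n), ∀ i, ρ i ∉ (L.map fun ρ => ρ i) := by
  classical
  set r := L.length with hr
  -- available values at column i
  set t : Fin n → Finset (Fin n) :=
    fun i => Finset.univ \ (L.map fun ρ => ρ i).toFinset with ht
  have hcard_col : ∀ i, (L.map fun ρ => ρ i).toFinset.card = r := by
    intro i
    rw [List.toFinset_card_of_nodup (hcol i), List.length_map]
  have htcard : ∀ i, (t i).card = n - r := by
    intro i
    rw [ht]
    rw [Finset.card_sdiff_of_subset (Finset.subset_univ _), hcard_col i, Finset.card_univ,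
      Fintype.card_fin]
  -- for a fixed value j, the number of columns where j is unavailable is r
  have hval : ∀ j : Fin n, (Finset.univ.filter fun i => j ∈ t i).card = n - r := by
    intro j
    have : (Finset.univ.filter fun i => j ∈ t i)
        = Finset.univ \ (L.map fun ρ => ρ⁻¹ j).toFinset := by
      ext i
      simp only [Finset.mem_filter, Finset.mem_univ, true_and, ht, Finset.mem_sdiff,
        List.mem_toFinset, List.mem_map]
      constructor
      · rintro h ⟨ρ, hρ, hρj⟩
        exact h ⟨ρ, hρ, by rw [← hρj]; simp⟩
      · rintro h ⟨ρ, hρ, hρj⟩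
        exact h ⟨ρ, hρ, by rw [← hρj]; simp⟩
    rw [this, Finset.card_sdiff_of_subset (Finset.subset_univ _), Finset.card_univ, Fintype.card_fin]
    congr 1
    have hLnodup : L.Nodup := by
      have hpos : 0 < n := lt_of_le_of_lt (Nat.zero_le r) hlen
      exact List.Nodup.of_map _ (hcol ⟨0, hpos⟩)
    have hinj : ∀ ρ₁ ∈ L, ∀ ρ₂ ∈ L, ρ₁⁻¹ j = ρ₂⁻¹ j → ρ₁ = ρ₂ := by
      intro ρ₁ h₁ ρ₂ h₂ hj
      have h1 : ρ₁ (ρ₁⁻¹ j) = j := by simp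
      have h2 : ρ₂ (ρ₁⁻¹ j) = j := by rw [hj]; simp
      exact (List.nodup_map_iff_inj_on hLnodup).mp (hcol (ρ₁⁻¹ j)) ρ₁ h₁ ρ₂ h₂
        (by rw [h1, h2])
    rw [List.toFinset_card_of_nodup, List.length_map]
    rw [List.nodup_map_iff_inj_on hLnodup]
    exact hinj
  -- Hall condition
  have hall : ∀ s : Finset (Fin n), s.card ≤ (s.biUnion t).card := by
    intro s
    set B := s.biUnion t with hB
    have hsub : ∀ i ∈ s, t i ⊆ B := fun i hi => Finset.subset_biUnion_of_mem t hi
    have key : ∑ i ∈ s, (t i).card ≤ B.card * (n - r) := by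
      have h1 : ∀ i ∈ s, (t i).card = ∑ j ∈ B, (if j ∈ t i then 1 else 0) := by
        intro i hi
        symm
        rw [← Finset.sum_filter, Finset.filter_mem_eq_inter,
          Finset.inter_eq_right.mpr (hsub i hi), Finset.sum_const, smul_eq_mul, mul_one]
      calc ∑ i ∈ s, (t i).card = ∑ i ∈ s, ∑ j ∈ B, (if j ∈ t i then 1 else 0) :=
            Finset.sum_congr rfl h1
        _ = ∑ j ∈ B, ∑ i ∈ s, (if j ∈ t i then 1 else 0) := Finset.sum_comm
        _ ≤ ∑ j ∈ B, (n - r) := by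
            apply Finset.sum_le_sum
            intro j _
            calc ∑ i ∈ s, (if j ∈ t i then 1 else 0)
                ≤ ∑ i : Fin n, (if j ∈ t i then 1 else 0) :=
                  Finset.sum_le_sum_of_subset (Finset.subset_univ s)
              _ = (Finset.univ.filter fun i => j ∈ t i).card := by
                  rw [← Finset.sum_filter, Finset.sum_const, smul_eq_mul, mul_one]
              _ = n - r := hval j
        _ = B.card * (n - r) := by rw [Finset.sum_const, smul_eq_mul]
    have hsum : ∑ i ∈ s, (t i).card = s.card * (n - r) := by
      rw [Finset.sum_congr rfl (fun i _ => htcard i), Finset.sum_const, smul_eq_mul]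
    have hnr : 0 < n - r := by omega
    have := hsum ▸ key
    exact Nat.le_of_mul_le_mul_right (by omega) hnr
  obtain ⟨f, hfinj, hft⟩ := (Finset.all_card_le_biUnion_card_iff_exists_injective t).mp hall
  have hbij : Function.Bijective f := Finite.injective_iff_bijective.mp hfinj
  refine ⟨Equiv.ofBijective f hbij, fun i hmem => ?_⟩
  have := hft i
  rw [ht] at this
  simp only [Finset.mem_sdiff, List.mem_toFinset] at this
  exact this.2 hmem

/-- Iterated extension up to length `n`. -/
lemma extend_list {n : ℕ} : ∀ (m : ℕ) (L : List (Equiv.Perm (Fin n))),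
    L.length + m = n → (∀ i, (L.map fun ρ => ρ i).Nodup) →
    ∃ L' : List (Equiv.Perm (Fin n)), L'.length = n ∧ (∀ ρ ∈ L, ρ ∈ L') ∧
      ∀ i, (L'.map fun ρ => ρ i).Nodup := by
  intro m
  induction m with
  | zero => intro L hL hcol; exact ⟨L, by omega, fun ρ h => h, hcol⟩
  | succ m ih =>
    intro L hL hcol
    obtain ⟨ρ, hρ⟩ := extend_step L (by omega) hcol
    obtain ⟨L', h1, h2, h3⟩ := ih (ρ :: L) (by simp; omega)
      (fun i => by simp only [List.map_cons, List.nodup_cons]; exact ⟨hρ i, hcol i⟩)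
    exact ⟨L', h1, fun σ hσ => h2 σ (List.mem_cons_of_mem _ hσ), h3⟩

/-- For `n ≥ 2` and permutations `λ`, `ν` of `{1, …, n}`: there is a multiset of `n`
permutations containing both `λ` and `ν` whose permutation matrices sum to the all-ones
matrix iff `λ` and `ν` disagree in every position.  In particular, if they disagree
everywhere, then `P_λ + P_ν` can be completed to the all-ones matrix by `n - 2` further
permutation matrices. -/
theorem mem_common_decomposition_iff_derangement
    (n : ℕ) (hn : 2 ≤ n) (lam nu : Equiv.Perm (Fin n)) :
    ((∃ M : Multiset (Equiv.Perm (Fin n)),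
        Multiset.card M = n ∧ ({lam, nu} : Multiset (Equiv.Perm (Fin n))) ≤ M ∧
        (M.map (permMat n)).sum = Matrix.of fun _ _ => 1) ↔
      ∀ i, lam i ≠ nu i) ∧
    ((∀ i, lam i ≠ nu i) →
      ∃ π : Fin (n - 2) → Equiv.Perm (Fin n),
        permMat n lam + permMat n nu + ∑ i, permMat n (π i)
          = Matrix.of fun _ _ => 1) := by
  classical
  -- forward direction
  have fwd : (∃ M : Multiset (Equiv.Perm (Fin n)),
        Multiset.card M = n ∧ ({lam, nu} : Multiset (Equiv.Perm (Fin n))) ≤ M ∧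
        (M.map (permMat n)).sum = Matrix.of fun _ _ => 1) →
      ∀ i, lam i ≠ nu i := by
    rintro ⟨M, hcard, hle, hsum⟩ i hi
    obtain ⟨M₂, rfl⟩ := Multiset.le_iff_exists_add.mp hle
    have h1 : ((({lam, nu} : Multiset (Equiv.Perm (Fin n))) + M₂).map (permMat n)).sum i (lam i)
        = 1 := by rw [hsum]; rfl
    rw [multiset_sum_apply, Multiset.map_map, Multiset.map_add, Multiset.sum_add] at h1
    simp only [Function.comp] at h1
    have h2 : (({lam, nu} : Multiset (Equiv.Perm (Fin n))).map
        fun ρ => (permMat n) ρ i (lam i)).sum = 2 := by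
      simp [permMat, ← hi]
    rw [h2] at h1
    omega
  -- backward: construct the multiset
  have bwd : (∀ i, lam i ≠ nu i) → ∃ M : Multiset (Equiv.Perm (Fin n)),
        Multiset.card M = n ∧ ({lam, nu} : Multiset (Equiv.Perm (Fin n))) ≤ M ∧
        (M.map (permMat n)).sum = Matrix.of fun _ _ => 1 := by
    intro hd
    have hcol0 : ∀ i, (([lam, nu] : List (Equiv.Perm (Fin n))).map fun ρ => ρ i).Nodup := by
      intro i; simp [hd i]
    obtain ⟨L', hlen, hmem, hcol⟩ := extend_list (n - 2) [lam, nu] (by simp; omega) hcol0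
    refine ⟨(L' : Multiset (Equiv.Perm (Fin n))), by simp [hlen], ?_, ?_⟩
    · -- {lam, nu} ≤ L'
      have hne : lam ≠ nu := fun h => hd ⟨0, by omega⟩ (by rw [h])
      have h1 : lam ∈ L' := hmem lam (by simp)
      have h2 : nu ∈ L' := hmem nu (by simp)
      have : ({lam, nu} : Multiset (Equiv.Perm (Fin n))).Nodup := by
        simp [hne]
      rw [Multiset.le_iff_subset this]
      intro x hx
      simp only [Multiset.insert_eq_cons, Multiset.mem_cons, Multiset.mem_singleton] at hx
      rcases hx with rfl | rfl
      · simpa using h1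
      · simpa using h2
    · -- sum is J
      funext i j
      rw [multiset_sum_apply, Multiset.map_map]
      have hunivcol : ((L'.map fun ρ => ρ i : List (Fin n)) : Multiset (Fin n))
          = Finset.univ.val := by
        have hnodup := hcol i
        have hcardn : ((L'.map fun ρ => ρ i : List (Fin n)) : Multiset (Fin n)).card = n := by
          simp [hlen]
        have : (⟨((L'.map fun ρ => ρ i : List (Fin n)) : Multiset (Fin n)),
            Multiset.coe_nodup.mpr hnodup⟩ :
            Finset (Fin n)) = Finset.univ := by
          apply Finset.eq_univ_of_card
          simp only [Fintype.card_fin]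
          exact_mod_cast hcardn
        exact congrArg Finset.val this
      have : ((L' : Multiset (Equiv.Perm (Fin n))).map fun ρ => (permMat n) ρ i j)
          = (Finset.univ.val.map fun v : Fin n => if v = j then 1 else 0) := by
        rw [← hunivcol]
        simp only [Multiset.map_coe, List.map_map]
        rfl
      simp only [Function.comp]
      rw [this]
      have : (Finset.univ.val.map fun v : Fin n => if v = j then (1:ℕ) else 0).sum
          = ∑ v : Fin n, if v = j then 1 else 0 := rfl
      rw [this, Finset.sum_ite_eq' Finset.univ j fun _ => 1]
      simp
  refine ⟨⟨fwd, bwd⟩, ?_⟩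
  -- second part
  intro hd
  obtain ⟨M, hcard, hle, hsum⟩ := bwd hd
  obtain ⟨M₂, rfl⟩ := Multiset.le_iff_exists_add.mp hle
  have hM₂ : Multiset.card M₂ = n - 2 := by
    simp only [Multiset.card_add] at hcard
    simp only [Multiset.insert_eq_cons, Multiset.card_cons, Multiset.card_singleton] at hcard
    omega
  set L := M₂.toList with hL
  have hLlen : L.length = n - 2 := by rw [hL, Multiset.length_toList, hM₂]
  refine ⟨fun i => L.get (Fin.cast hLlen.symm i), ?_⟩
  have hsum2 : ∑ i : Fin (n-2), permMat n (L.get (Fin.cast hLlen.symm i))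
      = (M₂.map (permMat n)).sum := by
    have h1 : ∑ i : Fin (n-2), permMat n (L.get (Fin.cast hLlen.symm i))
        = ∑ k : Fin L.length, permMat n (L.get k) := by
      apply Fintype.sum_equiv (finCongr hLlen.symm)
      intro i; rfl
    rw [h1]
    have h2 : ∑ k : Fin L.length, permMat n (L.get k) = (L.map (permMat n)).sum := by
      simp [Fin.sum_univ_fun_getElem L (permMat n)]
    rw [h2]
    have h3 : (Multiset.map (permMat n) M₂) = ↑(List.map (permMat n) M₂.toList) := by
      rw [← Multiset.map_coe, Multiset.coe_toList]
    rw [h3, Multiset.sum_coe]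
  rw [hsum2, ← hsum]
  rw [Multiset.map_add, Multiset.sum_add]
  have : (({lam, nu} : Multiset (Equiv.Perm (Fin n))).map (permMat n)).sum
      = permMat n lam + permMat n nu := by
    simp [Multiset.insert_eq_cons]
  rw [this, add_assoc]
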